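/- There is no 18-vertex C4-free Halin graph whose characteristic tree has a longest path of length exactly 4 or exactly 5. -/

import Mathlib

open SimpleGraph

/-- Degree of a vertex as the `ncard` of its neighbour set. -/
noncomputable def ncDeg {V : Type*} (G : SimpleGraph V) (v : V) : ℕ :=
  (G.neighborSet v).ncard

/-- A leaf is a vertex of degree one. -/
def IsLeaf {V : Type*} (G : SimpleGraph V) (v : V) : Prop :=
  ncDeg G v = 1

/-- A Halin graph, presented by its characteristic tree `T` and outer cycle `C`.
The underlying graph is `T ⊔ C`.  The outer cycle is a `2`-regular connected graph
whose support is exactly the set of leaves of `T`, every non-leaf of `T` has degree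
at least three, and the cycle is compatible with a planar embedding: for every edge
`uv` of `T`, the leaves lying in each component of `T - uv` are consecutive on the
cycle, i.e. they induce a connected subgraph of the cycle. -/
structure HalinGraph (V : Type*) [Fintype V] : Type _ where
  /-- the characteristic tree -/
  T : SimpleGraph V
  /-- the outer cycle -/
  C : SimpleGraph V
  tree_isTree : T.IsTree
  four_le_card : 4 ≤ Fintype.card V
  nonleaf_degree : ∀ v : V, ¬ IsLeaf T v → 3 ≤ ncDeg T v
  support_C : C.support = {v : V | IsLeaf T v}
  two_regular : ∀ v ∈ C.support, ncDeg C v = 2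
  cycle_connected : (C.induce C.support).Connected
  planar : ∀ u v : V, T.Adj u v →
    (C.induce {x : V | IsLeaf T x ∧ (T.deleteEdges {s(u, v)}).Reachable u x}).Connected

/-- The Halin graph itself: the (edge-disjoint) union of the tree and the outer cycle. -/
def HalinGraph.graph {V : Type*} [Fintype V] (H : HalinGraph V) : SimpleGraph V :=
  H.T ⊔ H.C

/-- Number of edges of a graph. -/
noncomputable def eCount {V : Type*} (G : SimpleGraph V) : ℕ :=
  G.edgeSet.ncard

/-- A graph is `C₄`-free iff it contains no cycle of length `4`. -/
def C4Free {V : Type*} (G : SimpleGraph V) : Prop :=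
  ∀ (v : V) (w : G.Walk v v), w.IsCycle → w.length ≠ 4

/-- A semi-branching vertex of the characteristic tree: a non-leaf with at least one
leaf neighbour and at least two non-leaf neighbours. -/
def SemiBranching {V : Type*} (T : SimpleGraph V) (v : V) : Prop :=
  ¬ IsLeaf T v ∧ (∃ x, T.Adj v x ∧ IsLeaf T x) ∧
    ∃ x y : V, x ≠ y ∧ T.Adj v x ∧ T.Adj v y ∧ ¬ IsLeaf T x ∧ ¬ IsLeaf T y

namespace HalinWork

variable {V : Type*}

lemma path_len_one {T : SimpleGraph V} (hT : T.IsAcyclic) {a b : V} (h : T.Adj a b)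
    {p : T.Walk a b} (hp : p.IsPath) : p.length = 1 := by
  have h1 : (⟨p, hp⟩ : T.Path a b) = SimpleGraph.Path.singleton h :=
    isAcyclic_iff_path_unique.mp hT _ _
  have h2 : p = Walk.cons h Walk.nil := congrArg Subtype.val h1
  simp [h2]

lemma noC3 {T : SimpleGraph V} (hT : T.IsAcyclic) {a b c : V}
    (hab : T.Adj a b) (hbc : T.Adj b c) (hca : T.Adj c a) : False := by
  have hp : (Walk.cons hab (Walk.cons hbc Walk.nil)).IsPath := by
    simp [Walk.isPath_def, hab.ne, hbc.ne, hca.ne']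
  have := path_len_one hT hca.symm hp
  simp at this

lemma noC4 {T : SimpleGraph V} (hT : T.IsAcyclic) {a b c d : V}
    (hab : T.Adj a b) (hbc : T.Adj b c) (hcd : T.Adj c d) (hda : T.Adj d a)
    (hac : a ≠ c) (hbd : b ≠ d) : False := by
  have hp : (Walk.cons hab (Walk.cons hbc (Walk.cons hcd Walk.nil))).IsPath := by
    simp [Walk.isPath_def, hab.ne, hbc.ne, hcd.ne, hac, hbd, hda.ne']
  have := path_len_one hT hda.symm hp
  simp at this

lemma noC5 {T : SimpleGraph V} (hT : T.IsAcyclic) {a b c d e : V}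
    (hab : T.Adj a b) (hbc : T.Adj b c) (hcd : T.Adj c d) (hde : T.Adj d e)
    (hea : T.Adj e a)
    (hac : a ≠ c) (had : a ≠ d) (hbd : b ≠ d) (hbe : b ≠ e) (hce : c ≠ e) : False := by
  have hp : (Walk.cons hab (Walk.cons hbc (Walk.cons hcd (Walk.cons hde Walk.nil)))).IsPath := by
    simp [Walk.isPath_def, hab.ne, hbc.ne, hcd.ne, hde.ne, hac, had, hbd, hbe, hce, hea.ne']
  have := path_len_one hT hea.symm hp
  simp at this

lemma noC6 {T : SimpleGraph V} (hT : T.IsAcyclic) {a b c d e f : V}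
    (hab : T.Adj a b) (hbc : T.Adj b c) (hcd : T.Adj c d) (hde : T.Adj d e)
    (hef : T.Adj e f) (hfa : T.Adj f a)
    (hac : a ≠ c) (had : a ≠ d) (hae : a ≠ e) (hbd : b ≠ d) (hbe : b ≠ e)
    (hbf : b ≠ f) (hce : c ≠ e) (hcf : c ≠ f) (hdf : d ≠ f) : False := by
  have hp : (Walk.cons hab (Walk.cons hbc (Walk.cons hcd (Walk.cons hde
      (Walk.cons hef Walk.nil))))).IsPath := by
    simp [Walk.isPath_def, hab.ne, hbc.ne, hcd.ne, hde.ne, hef.ne, hac, had, hae,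
      hbd, hbe, hbf, hce, hcf, hdf, hfa.ne']
  have := path_len_one hT hfa.symm hp
  simp at this

lemma c4_elim {G : SimpleGraph V} (hfree : C4Free G) {a b c d : V}
    (hab : G.Adj a b) (hbc : G.Adj b c) (hcd : G.Adj c d) (hda : G.Adj d a)
    (hac : a ≠ c) (hbd : b ≠ d) : False := by
  refine hfree a (Walk.cons hab (Walk.cons hbc (Walk.cons hcd (Walk.cons hda Walk.nil)))) ?_
    (by simp)
  have h1 := hab.ne; have h2 := hbc.ne; have h3 := hcd.ne; have h4 := hda.ne
  constructor
  · constructor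
    · simp [Walk.isTrail_def, Walk.edges_cons, Sym2.eq_iff]
      tauto
    · simp
  · simp [Walk.support_cons]
    exact ⟨⟨h2, hbd, h1.symm⟩, ⟨h3, hac.symm⟩, h4⟩

lemma leaf_unique_nbr {T : SimpleGraph V} {v a b : V} (hl : IsLeaf T v)
    (ha : T.Adj v a) (hb : T.Adj v b) : a = b := by
  obtain ⟨p, hp⟩ := Set.ncard_eq_one.mp hl
  have ha' : a ∈ T.neighborSet v := ha
  have hb' : b ∈ T.neighborSet v := hb
  rw [hp, Set.mem_singleton_iff] at ha' hb'
  rw [ha', hb']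

lemma not_leaf_of_two {T : SimpleGraph V} {v a b : V}
    (ha : T.Adj v a) (hb : T.Adj v b) (hne : a ≠ b) : ¬IsLeaf T v :=
  fun hl => hne (leaf_unique_nbr hl ha hb)

lemma leaf_parent {T : SimpleGraph V} {v : V} (hl : IsLeaf T v) :
    ∃ p, T.Adj v p ∧ ∀ q, T.Adj v q → q = p := by
  obtain ⟨p, hp⟩ := Set.ncard_eq_one.mp hl
  have hpmem : p ∈ T.neighborSet v := by rw [hp]; rfl
  exact ⟨p, hpmem, fun q hq => by
    have : q ∈ T.neighborSet v := hq
    rwa [hp, Set.mem_singleton_iff] at this⟩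

lemma exists_two_nbrs [Fintype V] {T : SimpleGraph V} {v : V}
    (h3 : 3 ≤ ncDeg T v) (c : V) :
    ∃ a b, T.Adj v a ∧ T.Adj v b ∧ a ≠ b ∧ a ≠ c ∧ b ≠ c := by
  unfold ncDeg at h3
  have hfin : (T.neighborSet v).Finite := Set.toFinite _
  have hdiff : 1 < (T.neighborSet v \ {c}).ncard := by
    have := Set.ncard_le_ncard_diff_add_ncard (T.neighborSet v) {c} (Set.finite_singleton c)
    rw [Set.ncard_singleton] at this
    omega
  obtain ⟨a, b, ha, hb, hab⟩ := (Set.one_lt_ncard_iff hfin.diff).mp hdiff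
  exact ⟨a, b, ha.1, hb.1, hab, ha.2, hb.2⟩

lemma no_closed {G : SimpleGraph V} {S X : Set V}
    (hconn : (G.induce S).Connected)
    (hcl : ∀ a, a ∈ X → ∀ b, b ∈ S → G.Adj a b → b ∈ X)
    {x y : V} (hx : x ∈ S) (hxX : x ∈ X) (hy : y ∈ S) (hyX : y ∉ X) : False := by
  obtain ⟨w⟩ := hconn.preconnected ⟨x, hx⟩ ⟨y, hy⟩
  have key : ∀ (a b : S) (_ : (G.induce S).Walk a b), (a : V) ∈ X → (b : V) ∈ X := by
    intro a b w
    induction w with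
    | nil => exact id
    | cons h p ih =>
        rename_i u v _
        exact fun hu => ih (hcl u hu v v.2 h)
  exact hyX (key ⟨x, hx⟩ ⟨y, hy⟩ w hxX)

lemma mid_of_path {G : SimpleGraph V} {S : Set V} {a b : S}
    (p : (G.induce S).Walk a b) (hp : p.IsPath) (hlen : 2 ≤ p.length) :
    ∃ x y z : V, x ∈ S ∧ y ∈ S ∧ z ∈ S ∧ x ≠ z ∧ G.Adj y x ∧ G.Adj y z := by
  cases p with
  | nil => simp at hlen
  | cons h q =>
    cases q with
    | nil => simp at hlen
    | cons h2 r =>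
      rename_i u v
      rw [Walk.cons_isPath_iff] at hp
      have hav : a ≠ v := by
        intro e
        exact hp.2 (by rw [e, Walk.support_cons]; exact List.mem_cons_of_mem _ r.start_mem_support)
      have h' : G.Adj (a : V) (u : V) := h
      have h2' : G.Adj (u : V) (v : V) := h2
      exact ⟨a, u, v, a.2, u.2, v.2, fun e => hav (Subtype.ext e), h'.symm, h2'⟩

lemma path_cases {G : SimpleGraph V} {S : Set V} {a b : S}
    (p : (G.induce S).Walk a b) (hp : p.IsPath) :
    a = b ∨ G.Adj (a : V) (b : V) ∨
      ∃ x y z : V, x ∈ S ∧ y ∈ S ∧ z ∈ S ∧ x ≠ z ∧ G.Adj y x ∧ G.Adj y z := by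
  cases p with
  | nil => exact Or.inl rfl
  | cons h q =>
    cases q with
    | nil => exact Or.inr (Or.inl h)
    | cons h2 r => exact Or.inr (Or.inr (mid_of_path (Walk.cons h (Walk.cons h2 r)) hp (by simp)))

lemma exists_middle {G : SimpleGraph V} {S : Set V} (hconn : (G.induce S).Connected)
    {x y z : V} (hx : x ∈ S) (hy : y ∈ S) (hz : z ∈ S)
    (hxy : x ≠ y) (hxz : x ≠ z) (hyz : y ≠ z) :
    ∃ a b c : V, a ∈ S ∧ b ∈ S ∧ c ∈ S ∧ a ≠ c ∧ G.Adj b a ∧ G.Adj b c := by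
  classical
  obtain ⟨w1⟩ := hconn.preconnected ⟨y, hy⟩ ⟨z, hz⟩
  obtain ⟨p, hp⟩ := w1.toPath
  rcases path_cases p hp with he | hAyz | hres
  · exact absurd (congrArg Subtype.val he) hyz
  · obtain ⟨w2⟩ := hconn.preconnected ⟨x, hx⟩ ⟨y, hy⟩
    obtain ⟨p2, hp2⟩ := w2.toPath
    rcases path_cases p2 hp2 with he2 | hAxy | hres2
    · exact absurd (congrArg Subtype.val he2) hxy
    · exact ⟨x, y, z, hx, hy, hz, hxz, hAxy.symm, hAyz⟩
    · exact hres2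
  · exact hres

lemma no_adj_leaves [Fintype V] {T : SimpleGraph V} (hT : T.IsTree)
    (hcard : 3 ≤ Fintype.card V)
    {a b : V} (hla : IsLeaf T a) (hlb : IsLeaf T b) (hab : T.Adj a b) : False := by
  classical
  obtain ⟨z, hza, hzb⟩ : ∃ z, z ≠ a ∧ z ≠ b := by
    by_contra h
    push_neg at h
    have hsub : (Finset.univ : Finset V) ⊆ {a, b} := by
      intro v _
      by_cases hva : v = a
      · simp [hva]
      · simp [h v hva]
    have := Finset.card_le_card hsub
    have h2 : ({a, b} : Finset V).card ≤ 2 := Finset.card_insert_le _ _ |>.trans (by simp)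
    rw [Finset.card_univ] at this
    omega
  obtain ⟨w0⟩ := hT.1.preconnected a z
  obtain ⟨p, hp⟩ := w0.toPath
  cases p with
  | nil => exact hza rfl
  | cons h q =>
    rename_i w
    have hwb : w = b := leaf_unique_nbr hla h hab
    subst hwb
    cases q with
    | nil => exact hzb rfl
    | cons h2 r =>
      rename_i w'
      have hw'a : w' = a := leaf_unique_nbr hlb h2 hab.symm
      subst hw'a
      rw [Walk.cons_isPath_iff] at hp
      exact hp.2 (by rw [Walk.support_cons]; exact List.mem_cons_of_mem _ r.start_mem_support)

lemma aux_classify {T : SimpleGraph V} {c c' : V}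
    (hls : ∀ w, T.Adj c w → w ≠ c' → ∀ u, T.Adj w u → u ≠ c → IsLeaf T u) :
    ∀ (u : V) (p : T.Walk c u), p.IsPath → ¬IsLeaf T u → c' ∉ p.support.tail →
      u = c ∨ (T.Adj c u ∧ u ≠ c') := by
  intro u p
  cases p with
  | nil => exact fun _ _ _ => Or.inl rfl
  | cons h q =>
    rename_i w
    intro hp hu hc'
    have hwtail : w ∈ (Walk.cons h q).support.tail := by
      rw [Walk.support_cons]
      exact q.start_mem_support
    have hw : w ≠ c' := fun e => hc' (e ▸ hwtail)
    cases q with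
    | nil => exact Or.inr ⟨h, hw⟩
    | cons h2 r =>
      rename_i v
      exfalso
      rw [Walk.cons_isPath_iff] at hp
      have hvc : v ≠ c := by
        intro e
        exact hp.2 (by rw [← e, Walk.support_cons]; exact List.mem_cons_of_mem _ r.start_mem_support)
      have hleaf : IsLeaf T v := hls w h hw v h2 hvc
      cases r with
      | nil => exact hu hleaf
      | cons h3 r' =>
        rename_i z
        have hz : z = w := leaf_unique_nbr hleaf h3 h2.symm
        have hp2 := hp.1
        rw [Walk.cons_isPath_iff] at hp2
        exact hp2.2 (by rw [Walk.support_cons, ← hz]; exact List.mem_cons_of_mem _ r'.start_mem_support)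

lemma reach_parent {T : SimpleGraph V} {e : Sym2 V} {b p c1 : V} (hb : IsLeaf T b)
    (hbp : T.Adj b p) (hr : (T.deleteEdges {e}).Reachable c1 b) (hne : c1 ≠ b) :
    (T.deleteEdges {e}).Reachable c1 p := by
  obtain ⟨w⟩ := hr.symm
  cases w with
  | nil => exact absurd rfl hne.symm
  | cons h q =>
    rename_i z
    have hTz : T.Adj b z := (SimpleGraph.deleteEdges_adj.mp h).1
    have hz : z = p := leaf_unique_nbr hb hTz hbp
    exact (Walk.reachable q).symm.trans (by rw [← hz])

lemma step4 {T : SimpleGraph V} (hT : T.IsAcyclic)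
    (hmax : ∀ (a b : V) (p : T.Walk a b), p.IsPath → p.length ≤ 4)
    {c y1 y0 w u u' : V}
    (hcy : T.Adj c y1) (hyy : T.Adj y1 y0) (hy0c : y0 ≠ c)
    (hcw : T.Adj c w) (hwy : w ≠ y1) (hwu : T.Adj w u) (huc : u ≠ c)
    (huu : T.Adj u u') (hu'w : u' ≠ w) : False := by
  -- triangle c-w-y1 when w = y0 : edges c-w, w-y1, y1-c
  have hwy0 : w ≠ y0 := fun e => noC3 hT hcw (show T.Adj w y1 from e ▸ hyy.symm) hcy.symm
  -- triangle c-w-u(=y1)?? u = y1 : edges c-w, w-u, u-c? no: w-y1 and y1-c : triangle c,w,y1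
  have huy1 : u ≠ y1 := fun e => noC3 hT hcw (show T.Adj w y1 from e ▸ hwu) hcy.symm
  -- u = y0 : C4 on (c,w,u,y1)
  have huy0 : u ≠ y0 := fun e =>
    noC4 hT hcw hwu (show T.Adj u y1 from e ▸ hyy.symm) hcy.symm huc.symm hwy
  -- u' = c : triangle w,u,c
  have hu'c : u' ≠ c := fun e => noC3 hT hwu (show T.Adj u c from e ▸ huu) hcw
  -- u' = y1 : C4 on (w,u,y1,c)
  have hu'y1 : u' ≠ y1 := fun e =>
    noC4 hT hwu (show T.Adj u y1 from e ▸ huu) hcy.symm hcw hwy huc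
  -- u' = y0 : C5 on (w,u,y0,y1,c)
  have hu'y0 : u' ≠ y0 := fun e =>
    noC5 hT hwu (show T.Adj u y0 from e ▸ huu) hyy.symm hcy.symm hcw
      hwy0 hwy huy1 huc hy0c
  have hpath : (Walk.cons huu.symm (Walk.cons hwu.symm (Walk.cons hcw.symm
      (Walk.cons hcy (Walk.cons hyy Walk.nil))))).IsPath := by
    rw [Walk.isPath_def]
    simp only [Walk.support_cons, Walk.support_nil, List.nodup_cons, List.mem_cons,
      List.mem_singleton, List.not_mem_nil, or_false, List.nodup_nil, and_true]
    push_neg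
    exact ⟨⟨huu.ne', hu'w, hu'c, hu'y1, hu'y0⟩, ⟨hwu.ne', huc, huy1, huy0⟩,
      ⟨hcw.ne', hwy, hwy0⟩, ⟨hcy.ne, hy0c.symm⟩, hyy.ne, trivial⟩
  have := hmax _ _ _ hpath
  simp only [Walk.length_cons, Walk.length_nil] at this
  omega

lemma step5 {T : SimpleGraph V} (hT : T.IsAcyclic)
    (hmax : ∀ (a b : V) (p : T.Walk a b), p.IsPath → p.length ≤ 5)
    {c1 c2 y4 y5 w u u' : V}
    (h12 : T.Adj c1 c2) (h24 : T.Adj c2 y4) (h45 : T.Adj y4 y5)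
    (hy41 : y4 ≠ c1) (hy51 : y5 ≠ c1) (hy52 : y5 ≠ c2)
    (hcw : T.Adj c1 w) (hwc2 : w ≠ c2) (hwu : T.Adj w u) (huc : u ≠ c1)
    (huu : T.Adj u u') (hu'w : u' ≠ w) : False := by
  -- w = y4 : triangle c1,w,c2
  have hwy4 : w ≠ y4 := fun e => noC3 hT hcw (show T.Adj w c2 from (e ▸ h24.symm)) h12.symm
  -- w = y5 : C4 (c1,w,y4,c2)
  have hwy5 : w ≠ y5 := fun e =>
    noC4 hT hcw (show T.Adj w y4 from e ▸ h45.symm) h24.symm h12.symm hy41.symm hwc2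
  -- u = c2 : triangle c1,w,c2
  have huc2 : u ≠ c2 := fun e => noC3 hT hcw (show T.Adj w c2 from e ▸ hwu) h12.symm
  -- u = y4 : C4 (c1,w,u,c2)
  have huy4 : u ≠ y4 := fun e =>
    noC4 hT hcw hwu (show T.Adj u c2 from e ▸ h24.symm) h12.symm huc.symm hwc2
  -- u = y5 : C5 (c1,w,u,y4,c2)
  have huy5 : u ≠ y5 := fun e =>
    noC5 hT hcw hwu (show T.Adj u y4 from e ▸ h45.symm) h24.symm h12.symm
      huc.symm hy41.symm hwy4 hwc2 huc2
  -- u' = c1 : triangle w,u,c1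
  have hu'c1 : u' ≠ c1 := fun e => noC3 hT hwu (show T.Adj u c1 from e ▸ huu) hcw
  -- u' = c2 : C4 (w,u,c2,c1)
  have hu'c2 : u' ≠ c2 := fun e =>
    noC4 hT hwu (show T.Adj u c2 from e ▸ huu) h12.symm hcw hwc2 huc
  -- u' = y4 : C5 (w,u,y4,c2,c1)
  have hu'y4 : u' ≠ y4 := fun e =>
    noC5 hT hwu (show T.Adj u y4 from e ▸ huu) h24.symm h12.symm hcw
      hwy4 hwc2 huc2 huc hy41
  -- u' = y5 : C6 (w,u,y5,y4,c2,c1)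
  have hu'y5 : u' ≠ y5 := fun e =>
    noC6 hT hwu (show T.Adj u y5 from e ▸ huu) h45.symm h24.symm h12.symm hcw
      hwy5 hwy4 hwc2 huy4 huc2 huc hy52 hy51 hy41
  have hpath : (Walk.cons huu.symm (Walk.cons hwu.symm (Walk.cons hcw.symm
      (Walk.cons h12 (Walk.cons h24 (Walk.cons h45 Walk.nil)))))).IsPath := by
    rw [Walk.isPath_def]
    simp only [Walk.support_cons, Walk.support_nil, List.nodup_cons, List.mem_cons,
      List.mem_singleton, List.not_mem_nil, or_false, List.nodup_nil, and_true]
    push_neg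
    exact ⟨⟨huu.ne', hu'w, hu'c1, hu'c2, hu'y4, hu'y5⟩,
      ⟨hwu.ne', huc, huc2, huy4, huy5⟩,
      ⟨hcw.ne', hwc2, hwy4, hwy5⟩,
      ⟨h12.ne, hy41.symm, hy51.symm⟩, ⟨h24.ne, hy52.symm⟩, h45.ne, trivial⟩
  have := hmax _ _ _ hpath
  simp only [Walk.length_cons, Walk.length_nil] at this
  omega

end HalinWork

namespace HalinWork

variable {V : Type*} [Fintype V]

lemma graph_adj_T (H : HalinGraph V) {a b : V} (h : H.T.Adj a b) : H.graph.Adj a b :=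
  (sup_adj _ _ _ _).mpr (Or.inl h)

lemma graph_adj_C (H : HalinGraph V) {a b : V} (h : H.C.Adj a b) : H.graph.Adj a b :=
  (sup_adj _ _ _ _).mpr (Or.inr h)

lemma ne_of_leaf {T : SimpleGraph V} {a b : V} (ha : IsLeaf T a) (hb : ¬IsLeaf T b) :
    a ≠ b := fun e => hb (e ▸ ha)

lemma fan_children (H : HalinGraph V) {w c : V}
    (hwc : H.T.Adj w c) (hchild : ∀ u, H.T.Adj w u → u ≠ c → IsLeaf H.T u)
    (hwl : ¬IsLeaf H.T w) :
    {x : V | IsLeaf H.T x ∧ (H.T.deleteEdges {s(w, c)}).Reachable w x} =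
      H.T.neighborSet w \ {c} := by
  classical
  ext x
  simp only [Set.mem_setOf_eq, Set.mem_diff, SimpleGraph.mem_neighborSet,
    Set.mem_singleton_iff]
  constructor
  · rintro ⟨hxl, hr⟩
    obtain ⟨w0⟩ := hr
    obtain ⟨p, hp⟩ := w0.toPath
    cases p with
    | nil => exact absurd hxl hwl
    | cons h q =>
      rename_i a
      have hTa : H.T.Adj w a ∧ s(w, a) ∉ ({s(w, c)} : Set (Sym2 V)) :=
        SimpleGraph.deleteEdges_adj.mp h
      have hac : a ≠ c := fun e => hTa.2 (by simp [e])
      have hal : IsLeaf H.T a := hchild a hTa.1 hac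
      cases q with
      | nil => exact ⟨hTa.1, hac⟩
      | cons h2 r =>
        rename_i z
        have hz : z = w :=
          leaf_unique_nbr hal (SimpleGraph.deleteEdges_adj.mp h2).1 hTa.1.symm
        exfalso
        rw [Walk.cons_isPath_iff] at hp
        exact hp.2 (by rw [Walk.support_cons]
                       exact List.mem_cons_of_mem _ (hz ▸ r.start_mem_support))
  · rintro ⟨hx, hxc⟩
    refine ⟨hchild x hx hxc, Walk.reachable (Walk.cons ?_ Walk.nil)⟩
    exact SimpleGraph.deleteEdges_adj.mpr ⟨hx, by simp [Sym2.eq_iff]; exact ⟨hxc, fun h => absurd h hwc.ne⟩⟩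

lemma fan_deg3 (H : HalinGraph V) (hfree : C4Free H.graph) {w c : V}
    (hwc : H.T.Adj w c) (hchild : ∀ u, H.T.Adj w u → u ≠ c → IsLeaf H.T u)
    (hwl : ¬IsLeaf H.T w) : ncDeg H.T w = 3 := by
  have hconn := H.planar w c hwc
  rw [fan_children H hwc hchild hwl] at hconn
  have hfin : (H.T.neighborSet w \ {c}).Finite := Set.toFinite _
  have hle : (H.T.neighborSet w \ {c}).ncard ≤ 2 := by
    by_contra hgt
    push_neg at hgt
    obtain ⟨x, y, z, hx, hy, hz, hxy, hxz, hyz⟩ := (Set.two_lt_ncard_iff hfin).mp hgt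
    obtain ⟨a, b, c', ha, hb, hc', hac, hba, hbc⟩ := exists_middle hconn hx hy hz hxy hxz hyz
    have hbleaf : IsLeaf H.T b := hchild b hb.1 hb.2
    exact c4_elim hfree (graph_adj_T H ha.1) (graph_adj_C H hba.symm)
      (graph_adj_C H hbc) (graph_adj_T H hc'.1.symm)
      (ne_of_leaf hbleaf hwl).symm hac
  have h1 : insert c (H.T.neighborSet w \ {c}) = H.T.neighborSet w := by
    rw [Set.insert_diff_singleton]
    exact Set.insert_eq_of_mem (show c ∈ H.T.neighborSet w from hwc)
  have key := Set.ncard_insert_of_notMem (s := H.T.neighborSet w \ {c}) (a := c)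
    (by simp) hfin
  rw [h1] at key
  have h3 := H.nonleaf_degree w hwl
  unfold ncDeg at h3 ⊢
  omega

lemma ncDeg_eq_degree {G : SimpleGraph V} [DecidableRel G.Adj] (v : V) :
    ncDeg G v = G.degree v := by
  rw [ncDeg, ← SimpleGraph.card_neighborSet_eq_degree,
    Set.ncard_eq_toFinset_card', Set.toFinset_card]

lemma case4 (H : HalinGraph V) (hcard : Fintype.card V = 18) (hfree : C4Free H.graph)
    {x0 x4 : V} (p : H.T.Walk x0 x4) (hp : p.IsPath) (hlen : p.length = 4)
    (hmax : ∀ (a b : V) (q : H.T.Walk a b), q.IsPath → q.length ≤ 4) : False := by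
  classical
  have hT := H.tree_isTree
  cases p with
  | nil => simp at hlen
  | cons h1 p =>
  rename_i x1
  cases p with
  | nil => simp at hlen
  | cons h2 p =>
  rename_i x2
  cases p with
  | nil => simp at hlen
  | cons h3 p =>
  rename_i x3
  cases p with
  | nil => simp at hlen
  | cons h4 p =>
  rename_i xx4
  cases p with
  | cons h5 p => simp only [Walk.length_cons] at hlen; omega
  | nil =>
  -- extract distinctness
  rw [Walk.isPath_def] at hp
  simp only [Walk.support_cons, Walk.support_nil, List.nodup_cons, List.mem_cons,
    List.mem_singleton, List.not_mem_nil, or_false, List.nodup_nil, and_true] at hp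
  push_neg at hp
  obtain ⟨⟨h01, h02, h03, h04⟩, ⟨h12, h13, h14⟩, ⟨h23, h24⟩, h34, -⟩ := hp
  -- leaf step
  have hls : ∀ w, H.T.Adj x2 w → ∀ u, H.T.Adj w u → u ≠ x2 → IsLeaf H.T u := by
    intro w hw u hu huc
    by_contra hul
    obtain ⟨a, b', ha, hb', hab, haw, hbw⟩ := exists_two_nbrs (H.nonleaf_degree u hul) w
    by_cases hcase : w = x1
    · exact step4 hT.2 hmax h3 h4 h24.symm hw (hcase ▸ h13) hu huc ha haw
    · exact step4 hT.2 hmax h2.symm h1.symm h02 hw hcase hu huc ha haw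
  -- classification
  have hclassify : ∀ v, ¬IsLeaf H.T v → v = x2 ∨ H.T.Adj x2 v := by
    intro v hv
    obtain ⟨w0⟩ := hT.1.preconnected x2 v
    obtain ⟨p0, hp0⟩ := w0.toPath
    have hct : x2 ∉ p0.support.tail := by
      have hnd := hp0.support_nodup
      rw [p0.support_eq_cons] at hnd
      exact (List.nodup_cons.mp hnd).1
    rcases aux_classify (fun w hw _ => hls w hw) v p0 hp0 hv hct with h | h
    · exact Or.inl h
    · exact Or.inr h.1
  have hnlc : ¬IsLeaf H.T x2 := not_leaf_of_two h2.symm h3 h13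
  have h3card : 3 ≤ Fintype.card V := by omega
  have hx0leaf : IsLeaf H.T x0 := hls x1 h2.symm x0 h1.symm h02
  have hx0nadj : ¬H.T.Adj x2 x0 := fun hcx => h12 (leaf_unique_nbr hx0leaf h1 hcx.symm)
  -- the centre has no leaf neighbours
  have hBempty : ∀ v, IsLeaf H.T v → ¬H.T.Adj x2 v := by
    intro b0 hb0 hcb0
    refine no_closed (G := H.C) (S := H.C.support)
      (X := {v | IsLeaf H.T v ∧ H.T.Adj x2 v}) H.cycle_connected ?_
      (x := b0) (y := x0) ?_ ⟨hb0, hcb0⟩ ?_ ?_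
    · rintro a ⟨hal, hca⟩ m hmS hadm
      have hml : IsLeaf H.T m := by rwa [H.support_C] at hmS
      obtain ⟨q, hq, -⟩ := leaf_parent hml
      have hqi : ¬IsLeaf H.T q := fun hql => no_adj_leaves hT h3card hml hql hq
      rcases hclassify q hqi with rfl | hcq
      · exact ⟨hml, hq.symm⟩
      · exact (c4_elim hfree (graph_adj_T H hca) (graph_adj_C H hadm)
          (graph_adj_T H hq) (graph_adj_T H hcq.symm)
          (ne_of_leaf hml hnlc).symm (ne_of_leaf hal hqi)).elim
    · rw [H.support_C]; exact hb0
    · rw [H.support_C]; exact hx0leaf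
    · exact fun hX => hx0nadj hX.2
  -- counting
  have hsum := H.T.sum_degrees_eq_twice_card_edges
  have hedge : H.T.edgeFinset.card = 17 := by
    have h := hT.card_edgeFinset
    omega
  set A := H.T.neighborFinset x2 with hAdef
  have hcA : x2 ∉ A := by simp [hAdef]
  have hdegA : ∀ v ∈ A, H.T.degree v = 3 := by
    intro v hv
    rw [SimpleGraph.mem_neighborFinset] at hv
    have hvnl : ¬IsLeaf H.T v := fun hl => hBempty v hl hv
    rw [← ncDeg_eq_degree]
    exact fan_deg3 H hfree hv.symm (fun u hu huc => hls v hv u hu huc) hvnl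
  have hrest : ∀ v ∈ Finset.univ \ insert x2 A, H.T.degree v = 1 := by
    intro v hv
    rw [Finset.mem_sdiff, Finset.mem_insert] at hv
    push_neg at hv
    have hvx2 : v ≠ x2 := hv.2.1
    have hvA : ¬H.T.Adj x2 v := by
      have := hv.2.2
      rwa [hAdef, SimpleGraph.mem_neighborFinset] at this
    have hleaf : IsLeaf H.T v := by
      by_contra hnl
      rcases hclassify v hnl with rfl | hadj
      · exact hvx2 rfl
      · exact hvA hadj
    rw [← ncDeg_eq_degree]; exact hleaf
  have hsplit : (Finset.univ : Finset V) = insert x2 A ∪ (Finset.univ \ insert x2 A) :=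
    (Finset.union_sdiff_of_subset (Finset.subset_univ _)).symm
  rw [hsplit, Finset.sum_union Finset.disjoint_sdiff, Finset.sum_insert hcA,
    Finset.sum_congr rfl hdegA, Finset.sum_congr rfl hrest, Finset.sum_const, Finset.sum_const,
    hedge] at hsum
  have hAcard : A.card = H.T.degree x2 := rfl
  have hins : (insert x2 A).card = A.card + 1 := Finset.card_insert_of_notMem hcA
  have hsd : (Finset.univ \ insert x2 A).card = 18 - (A.card + 1) := by
    rw [Finset.card_sdiff_of_subset (Finset.subset_univ _), Finset.card_univ, hcard, hins]
  have hbound : A.card + 1 ≤ 18 := by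
    calc A.card + 1 = (insert x2 A).card := hins.symm
    _ ≤ Fintype.card V := Finset.card_le_univ _
    _ = 18 := hcard
  rw [hsd] at hsum
  simp only [smul_eq_mul] at hsum
  omega

lemma del_adj {T : SimpleGraph V} {a b u v : V} (h : T.Adj a b)
    (h1 : a = u → b ≠ v) (h2 : a = v → b ≠ u) :
    (T.deleteEdges {s(u, v)}).Adj a b := by
  refine SimpleGraph.deleteEdges_adj.mpr ⟨h, fun hmem => ?_⟩
  rw [Set.mem_singleton_iff, Sym2.eq_iff] at hmem
  rcases hmem with ⟨ha, hb⟩ | ⟨ha, hb⟩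
  · exact h1 ha hb
  · exact h2 ha hb


lemma case5 (H : HalinGraph V) (hcard : Fintype.card V = 18) (hfree : C4Free H.graph)
    {x0 x5 : V} (p : H.T.Walk x0 x5) (hp : p.IsPath) (hlen : p.length = 5)
    (hmax : ∀ (a b : V) (q : H.T.Walk a b), q.IsPath → q.length ≤ 5) : False := by
  classical
  have hT := H.tree_isTree
  cases p with
  | nil => simp at hlen
  | cons h1 p =>
  rename_i x1
  cases p with
  | nil => simp at hlen
  | cons h2 p =>
  rename_i x2
  cases p with
  | nil => simp at hlen
  | cons h3 p =>
  rename_i x3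
  cases p with
  | nil => simp at hlen
  | cons h4 p =>
  rename_i x4
  cases p with
  | nil => simp at hlen
  | cons h5 p =>
  rename_i xx5
  cases p with
  | cons h6 p => simp only [Walk.length_cons] at hlen; omega
  | nil =>
  rw [Walk.isPath_def] at hp
  simp only [Walk.support_cons, Walk.support_nil, List.nodup_cons, List.mem_cons,
    List.mem_singleton, List.not_mem_nil, or_false, List.nodup_nil, and_true] at hp
  push_neg at hp
  obtain ⟨⟨h01, h02, h03, h04, h05⟩, ⟨h12, h13, h14, h15⟩, ⟨h23, h24, h25⟩,
    ⟨h34, h35⟩, h45, -⟩ := hp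
  -- leaf steps for the two centres x2 and x3
  have hls1 : ∀ w, H.T.Adj x2 w → w ≠ x3 → ∀ u, H.T.Adj w u → u ≠ x2 → IsLeaf H.T u := by
    intro w hw hwc2 u hu huc
    by_contra hul
    obtain ⟨a, b', ha, hb', hab, haw, hbw⟩ := exists_two_nbrs (H.nonleaf_degree u hul) w
    exact step5 hT.2 hmax h3 h4 h5 h24.symm h25.symm h35.symm hw hwc2 hu huc ha haw
  have hls2 : ∀ w, H.T.Adj x3 w → w ≠ x2 → ∀ u, H.T.Adj w u → u ≠ x3 → IsLeaf H.T u := by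
    intro w hw hwc2 u hu huc
    by_contra hul
    obtain ⟨a, b', ha, hb', hab, haw, hbw⟩ := exists_two_nbrs (H.nonleaf_degree u hul) w
    exact step5 hT.2 hmax h3.symm h2.symm h1.symm h13 h03 h02 hw hwc2 hu huc ha haw
  -- classification of non-leaves
  have hclassify : ∀ v, ¬IsLeaf H.T v →
      v = x2 ∨ v = x3 ∨ (H.T.Adj x2 v ∧ v ≠ x3) ∨ (H.T.Adj x3 v ∧ v ≠ x2) := by
    intro v hv
    obtain ⟨w0⟩ := hT.1.preconnected x2 v
    obtain ⟨p0, hp0⟩ := w0.toPath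
    by_cases hmem : x3 ∈ p0.support
    · set q := p0.dropUntil x3 hmem with hqdef
      have hqpath : q.IsPath := hp0.dropUntil hmem
      have hx2tail : x2 ∉ q.support.tail := by
        have hsp : (p0.takeUntil x3 hmem).support ++ q.support.tail = p0.support := by
          rw [← Walk.support_append, Walk.take_spec]
        have hnd : ((p0.takeUntil x3 hmem).support ++ q.support.tail).Nodup := by
          rw [hsp]; exact hp0.support_nodup
        have hdisj := (List.nodup_append'.mp hnd).2.2
        exact fun hmem2 => hdisj (p0.takeUntil x3 hmem).start_mem_support hmem2
      rcases aux_classify hls2 v q hqpath hv hx2tail with h | h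
      · exact Or.inr (Or.inl h)
      · exact Or.inr (Or.inr (Or.inr h))
    · have hct : x3 ∉ p0.support.tail := fun h => hmem (List.mem_of_mem_tail h)
      rcases aux_classify hls1 v p0 hp0 hv hct with h | h
      · exact Or.inl h
      · exact Or.inr (Or.inr (Or.inl h))
  have hnl2 : ¬IsLeaf H.T x2 := not_leaf_of_two h2.symm h3 h13
  have hnl3 : ¬IsLeaf H.T x3 := not_leaf_of_two h3.symm h4 h24
  have h3card : 3 ≤ Fintype.card V := by omega
  have hx0leaf : IsLeaf H.T x0 := hls1 x1 h2.symm h13 x0 h1.symm h02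
  have hx5leaf : IsLeaf H.T x5 := hls2 x4 h4 h24.symm x5 h5 h35.symm
  have hx0nadj : ¬H.T.Adj x2 x0 := fun hcx => h12 (leaf_unique_nbr hx0leaf h1 hcx.symm)
  have hx5nadj : ¬H.T.Adj x3 x5 := fun hcx => h34 ((leaf_unique_nbr hx5leaf h5.symm hcx.symm).symm)
  -- bridges
  have hbr : ¬(H.T.deleteEdges {s(x2, x3)}).Reachable x2 x3 :=
    (SimpleGraph.isBridge_iff.mp ((isAcyclic_iff_forall_adj_isBridge.mp hT.2) h3))
  have hbr' : ¬(H.T.deleteEdges {s(x3, x2)}).Reachable x3 x2 :=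
    (SimpleGraph.isBridge_iff.mp ((isAcyclic_iff_forall_adj_isBridge.mp hT.2) h3.symm))
  -- x2 has no leaf neighbours
  have hB1 : ∀ v, IsLeaf H.T v → ¬H.T.Adj x2 v := by
    intro b0 hb0 hcb0
    refine no_closed (G := H.C)
      (S := {x : V | IsLeaf H.T x ∧ (H.T.deleteEdges {s(x2, x3)}).Reachable x2 x})
      (X := {v | IsLeaf H.T v ∧ H.T.Adj x2 v}) (H.planar x2 x3 h3) ?_
      (x := b0) (y := x0) ?_ ⟨hb0, hcb0⟩ ?_ ?_
    · rintro a ⟨hal, hca⟩ m ⟨hml, hmr⟩ hadm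
      have hqi : ∀ {q : V}, H.T.Adj m q → ¬IsLeaf H.T q :=
        fun hq hql => no_adj_leaves hT h3card hml hql hq
      obtain ⟨q, hq, -⟩ := leaf_parent hml
      have hqr : (H.T.deleteEdges {s(x2, x3)}).Reachable x2 q :=
        reach_parent hml hq hmr (ne_of_leaf hml hnl2).symm
      rcases hclassify q (hqi hq) with rfl | rfl | ⟨hq2, hq3⟩ | ⟨hq3, hq2⟩
      · exact ⟨hml, hq.symm⟩
      · exact (hbr hqr).elim
      · exact (c4_elim hfree (graph_adj_T H hca) (graph_adj_C H hadm)
          (graph_adj_T H hq) (graph_adj_T H hq2.symm)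
          (ne_of_leaf hml hnl2).symm (ne_of_leaf hal (hqi hq))).elim
      · exact (hbr (hqr.trans (Walk.reachable (Walk.cons
          (del_adj hq3.symm (fun e => absurd e hq2) (fun e => absurd e hq3.ne')) Walk.nil)))).elim
    · -- b0 is in the leaf set of the x2-side
      exact ⟨hb0, Walk.reachable (Walk.cons
        (del_adj hcb0 (fun _ => ne_of_leaf hb0 hnl3) (fun e => absurd e h23)) Walk.nil)⟩
    · -- x0 is in the leaf set of the x2-side
      exact ⟨hx0leaf, Walk.reachable (Walk.cons
        (del_adj h2.symm (fun _ => h13) (fun e => absurd e h23)) (Walk.cons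
        (del_adj h1.symm (fun e => absurd e h12) (fun e => absurd e h13)) Walk.nil))⟩
    · exact fun hX => hx0nadj hX.2
  -- x3 has no leaf neighbours
  have hB2 : ∀ v, IsLeaf H.T v → ¬H.T.Adj x3 v := by
    intro b0 hb0 hcb0
    refine no_closed (G := H.C)
      (S := {x : V | IsLeaf H.T x ∧ (H.T.deleteEdges {s(x3, x2)}).Reachable x3 x})
      (X := {v | IsLeaf H.T v ∧ H.T.Adj x3 v}) (H.planar x3 x2 h3.symm) ?_
      (x := b0) (y := x5) ?_ ⟨hb0, hcb0⟩ ?_ ?_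
    · rintro a ⟨hal, hca⟩ m ⟨hml, hmr⟩ hadm
      have hqi : ∀ {q : V}, H.T.Adj m q → ¬IsLeaf H.T q :=
        fun hq hql => no_adj_leaves hT h3card hml hql hq
      obtain ⟨q, hq, -⟩ := leaf_parent hml
      have hqr : (H.T.deleteEdges {s(x3, x2)}).Reachable x3 q :=
        reach_parent hml hq hmr (ne_of_leaf hml hnl3).symm
      rcases hclassify q (hqi hq) with rfl | rfl | ⟨hq2, hq3⟩ | ⟨hq3, hq2⟩
      · exact (hbr' hqr).elim
      · exact ⟨hml, hq.symm⟩
      · exact (hbr' (hqr.trans (Walk.reachable (Walk.cons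
          (del_adj hq2.symm (fun e => absurd e hq3) (fun e => absurd e hq2.ne')) Walk.nil)))).elim
      · exact (c4_elim hfree (graph_adj_T H hca) (graph_adj_C H hadm)
          (graph_adj_T H hq) (graph_adj_T H hq3.symm)
          (ne_of_leaf hml hnl3).symm (ne_of_leaf hal (hqi hq))).elim
    · exact ⟨hb0, Walk.reachable (Walk.cons
        (del_adj hcb0 (fun _ => ne_of_leaf hb0 hnl2) (fun e => absurd e.symm h23)) Walk.nil)⟩
    · exact ⟨hx5leaf, Walk.reachable (Walk.cons
        (del_adj h4 (fun _ => h24.symm) (fun e => absurd e.symm h23)) (Walk.cons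
        (del_adj h5 (fun e => absurd e h34.symm) (fun e => absurd e h24.symm)) Walk.nil))⟩
    · exact fun hX => hx5nadj hX.2
  -- counting
  have hsum := H.T.sum_degrees_eq_twice_card_edges
  have hedge : H.T.edgeFinset.card = 17 := by
    have h := hT.card_edgeFinset
    omega
  set A1 := H.T.neighborFinset x2 \ {x3} with hA1def
  set A2 := H.T.neighborFinset x3 \ {x2} with hA2def
  have hmemA1 : ∀ v, v ∈ A1 ↔ (H.T.Adj x2 v ∧ v ≠ x3) := by
    intro v; rw [hA1def]; simp [SimpleGraph.mem_neighborFinset]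
  have hmemA2 : ∀ v, v ∈ A2 ↔ (H.T.Adj x3 v ∧ v ≠ x2) := by
    intro v; rw [hA2def]; simp [SimpleGraph.mem_neighborFinset]
  have hx2A1 : x2 ∉ A1 := fun h => H.T.irrefl ((hmemA1 x2).mp h).1
  have hx2A2 : x2 ∉ A2 := fun h => ((hmemA2 x2).mp h).2 rfl
  have hx3A1 : x3 ∉ A1 := fun h => ((hmemA1 x3).mp h).2 rfl
  have hx3A2 : x3 ∉ A2 := fun h => H.T.irrefl ((hmemA2 x3).mp h).1
  have hdisj12 : Disjoint A1 A2 := by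
    rw [Finset.disjoint_left]
    intro v hv1 hv2
    exact noC3 hT.2 h3 ((hmemA2 v).mp hv2).1 ((hmemA1 v).mp hv1).1.symm
  have hdegA1 : ∀ v ∈ A1, H.T.degree v = 3 := by
    intro v hv
    obtain ⟨hv2, hv3⟩ := (hmemA1 v).mp hv
    have hvnl : ¬IsLeaf H.T v := fun hl => hB1 v hl hv2
    rw [← ncDeg_eq_degree]
    exact fan_deg3 H hfree hv2.symm (fun u hu huc => hls1 v hv2 hv3 u hu huc) hvnl
  have hdegA2 : ∀ v ∈ A2, H.T.degree v = 3 := by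
    intro v hv
    obtain ⟨hv3, hv2⟩ := (hmemA2 v).mp hv
    have hvnl : ¬IsLeaf H.T v := fun hl => hB2 v hl hv3
    rw [← ncDeg_eq_degree]
    exact fan_deg3 H hfree hv3.symm (fun u hu huc => hls2 v hv3 hv2 u hu huc) hvnl
  have hd2 : H.T.degree x2 = A1.card + 1 := by
    have : insert x3 A1 = H.T.neighborFinset x2 := by
      ext v
      rw [Finset.mem_insert, hmemA1 v, SimpleGraph.mem_neighborFinset]
      constructor
      · rintro (rfl | ⟨hv, -⟩)
        · exact h3
        · exact hv
      · intro hv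
        by_cases hvx3 : v = x3
        · exact Or.inl hvx3
        · exact Or.inr ⟨hv, hvx3⟩
    rw [SimpleGraph.degree, ← this, Finset.card_insert_of_notMem hx3A1]
  have hd3 : H.T.degree x3 = A2.card + 1 := by
    have : insert x2 A2 = H.T.neighborFinset x3 := by
      ext v
      rw [Finset.mem_insert, hmemA2 v, SimpleGraph.mem_neighborFinset]
      constructor
      · rintro (rfl | ⟨hv, -⟩)
        · exact h3.symm
        · exact hv
      · intro hv
        by_cases hvx2 : v = x2
        · exact Or.inl hvx2
        · exact Or.inr ⟨hv, hvx2⟩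
    rw [SimpleGraph.degree, ← this, Finset.card_insert_of_notMem hx2A2]
  set S : Finset V := insert x2 (insert x3 (A1 ∪ A2)) with hSdef
  have hx2S : x2 ∉ insert x3 (A1 ∪ A2) := by
    rw [Finset.mem_insert, Finset.mem_union]
    push_neg
    exact ⟨h23, hx2A1, hx2A2⟩
  have hx3S : x3 ∉ A1 ∪ A2 := by
    rw [Finset.mem_union]
    push_neg
    exact ⟨hx3A1, hx3A2⟩
  have hrest : ∀ v ∈ Finset.univ \ S, H.T.degree v = 1 := by
    intro v hv
    rw [Finset.mem_sdiff, hSdef, Finset.mem_insert, Finset.mem_insert, Finset.mem_union] at hv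
    push_neg at hv
    obtain ⟨-, hvx2, hvx3, hvA1, hvA2⟩ := hv
    have hleaf : IsLeaf H.T v := by
      by_contra hnl
      rcases hclassify v hnl with rfl | rfl | h | h
      · exact hvx2 rfl
      · exact hvx3 rfl
      · exact hvA1 ((hmemA1 v).mpr h)
      · exact hvA2 ((hmemA2 v).mpr h)
    rw [← ncDeg_eq_degree]; exact hleaf
  have hsplit : (Finset.univ : Finset V) = S ∪ (Finset.univ \ S) :=
    (Finset.union_sdiff_of_subset (Finset.subset_univ _)).symm
  rw [hsplit, Finset.sum_union Finset.disjoint_sdiff, hSdef, Finset.sum_insert hx2S,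
    Finset.sum_insert hx3S, Finset.sum_union hdisj12,
    Finset.sum_congr rfl hdegA1, Finset.sum_congr rfl hdegA2,
    Finset.sum_congr rfl hrest, Finset.sum_const, Finset.sum_const, Finset.sum_const,
    hedge] at hsum
  have hScard : S.card = A1.card + A2.card + 2 := by
    rw [hSdef, Finset.card_insert_of_notMem hx2S, Finset.card_insert_of_notMem hx3S,
      Finset.card_union_of_disjoint hdisj12]
  have hsd : (Finset.univ \ S).card = 18 - S.card := by
    rw [Finset.card_sdiff_of_subset (Finset.subset_univ _), Finset.card_univ, hcard]
  have hbound : S.card ≤ 18 := by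
    calc S.card ≤ Fintype.card V := Finset.card_le_univ _
    _ = 18 := hcard
  rw [hsd] at hsum
  simp only [smul_eq_mul] at hsum
  omega

end HalinWork

/-- There is no `18`-vertex `C₄`-free Halin graph whose characteristic tree has a
longest path of length exactly `4` or exactly `5`. -/
theorem halin_eighteen_no_longest_four_or_five {V : Type*} [Fintype V]
    (hcard : Fintype.card V = 18) (H : HalinGraph V) (hfree : C4Free H.graph) :
    ¬ ((∃ (a b : V) (p : H.T.Walk a b), p.IsPath ∧ p.length = 4) ∧
        ∀ (a b : V) (p : H.T.Walk a b), p.IsPath → p.length ≤ 4) ∧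
    ¬ ((∃ (a b : V) (p : H.T.Walk a b), p.IsPath ∧ p.length = 5) ∧
        ∀ (a b : V) (p : H.T.Walk a b), p.IsPath → p.length ≤ 5) := by
  constructor
  · rintro ⟨⟨a, b, p, hp, hlen⟩, hmax⟩
    exact HalinWork.case4 H hcard hfree p hp hlen hmax
  · rintro ⟨⟨a, b, p, hp, hlen⟩, hmax⟩
    exact HalinWork.case5 H hcard hfree p hp hlen hmax
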